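/- Let T be a lattice triangle with vertices O = (0,0), A, B whose circumcenter F is a lattice point, and suppose the lattice length ℓ_O of side AB is even. Then the orthocenter H of T lies in 2ℤ² (both coordinates even), and if θ is the (acute) angle of T at O, then tan θ ≤ ℓ_O/2. -/

import Mathlib

/-- Lattice length of the segment joining two lattice points. -/
def llen (P Q : ℤ × ℤ) : ℕ := Int.gcd (P.1 - Q.1) (P.2 - Q.2)

/-- Integer dot product on `ℤ × ℤ`. -/
def dotv (u v : ℤ × ℤ) : ℤ := u.1 * v.1 + u.2 * v.2

/-- The three vertices are not collinear (a genuine triangle). -/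
def Noncollinear (V₀ V₁ V₂ : ℤ × ℤ) : Prop :=
  (V₁.1 - V₀.1) * (V₂.2 - V₀.2) - (V₂.1 - V₀.1) * (V₁.2 - V₀.2) ≠ 0

/-- All three interior angles are strictly acute (positive dot products at each vertex). -/
def IsAcute (V₀ V₁ V₂ : ℤ × ℤ) : Prop :=
  0 < dotv (V₁ - V₀) (V₂ - V₀) ∧ 0 < dotv (V₀ - V₁) (V₂ - V₁) ∧
    0 < dotv (V₀ - V₂) (V₁ - V₂)

/-- `H` is the orthocenter of the triangle `V₀V₁V₂`. -/
def IsOrthocenter (H V₀ V₁ V₂ : ℤ × ℤ) : Prop :=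
  dotv (H - V₀) (V₁ - V₂) = 0 ∧ dotv (H - V₁) (V₂ - V₀) = 0 ∧
    dotv (H - V₂) (V₀ - V₁) = 0

/-- `F` is the circumcenter of the triangle `V₀V₁V₂` (equidistant from the vertices). -/
def IsCircumcenter (F V₀ V₁ V₂ : ℤ × ℤ) : Prop :=
  dotv (F - V₀) (F - V₀) = dotv (F - V₁) (F - V₁) ∧
    dotv (F - V₀) (F - V₀) = dotv (F - V₂) (F - V₂)

/-- Lattice perimeter of a lattice triangle. -/
def latPerim (V₀ V₁ V₂ : ℤ × ℤ) : ℕ := llen V₀ V₁ + llen V₁ V₂ + llen V₀ V₂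

/-- The interior angle of the triangle at vertex `V`, with the other vertices `A`, `B`. -/
noncomputable def angleAt (V A B : ℤ × ℤ) : ℝ :=
  Real.arccos ((((A.1 - V.1) * (B.1 - V.1) + (A.2 - V.2) * (B.2 - V.2) : ℤ) : ℝ) /
    (Real.sqrt (((A.1 - V.1) ^ 2 + (A.2 - V.2) ^ 2 : ℤ)) *
      Real.sqrt (((B.1 - V.1) ^ 2 + (B.2 - V.2) ^ 2 : ℤ))))

/-- Abstract arithmetic core: a vector `(h1, h2)` orthogonal to `(w1, w2)`, with even
coordinates, satisfying the cross identity, forces `2|c| ≤ L·d`. -/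
lemma stmt11_core (c d L w1 w2 h1 h2 : ℤ) (hd : 0 < d)
    (hgpos : 0 < Int.gcd w1 w2) (hL : L = (Int.gcd w1 w2 : ℤ))
    (hh1 : Even h1) (hh2 : Even h2)
    (hperp : w1 * h1 + w2 * h2 = 0)
    (hcross : c * (w1 * h2 - w2 * h1) = d * (w1 ^ 2 + w2 ^ 2)) :
    2 * |c| ≤ L * d := by
  have hgcd1 : L ∣ w1 := hL ▸ Int.gcd_dvd_left w1 w2
  have hgcd2 : L ∣ w2 := hL ▸ Int.gcd_dvd_right w1 w2
  have hLpos : 0 < L := by rw [hL]; exact_mod_cast hgpos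
  obtain ⟨p, hw1'⟩ := hgcd1
  obtain ⟨q, hw2'⟩ := hgcd2
  have hcop : Int.gcd p q = 1 := by
    have h1' : p = w1 / L := by rw [hw1']; exact (Int.mul_ediv_cancel_left _ hLpos.ne').symm
    have h2' : q = w2 / L := by rw [hw2']; exact (Int.mul_ediv_cancel_left _ hLpos.ne').symm
    rw [h1', h2', hL]
    exact Int.gcd_div_gcd_div_gcd hgpos
  have hperp' : p * h1 + q * h2 = 0 := by
    have hfac : L * (p * h1 + q * h2) = 0 := by
      rw [hw1', hw2'] at hperp; linear_combination hperp
    exact (mul_eq_zero.mp hfac).resolve_left hLpos.ne'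
  obtain ⟨t, ht1, ht2⟩ : ∃ t : ℤ, h1 = -(q * t) ∧ h2 = p * t := by
    rcases eq_or_ne q 0 with hq0 | hq0
    · have hp1 : p = 1 ∨ p = -1 := by
        have h' := hcop; rw [hq0] at h'; simp [Int.gcd] at h'; omega
      have hh1z : h1 = 0 := by
        rcases hp1 with h | h <;> rw [hq0, h] at hperp' <;> omega
      refine ⟨p * h2, by rw [hq0]; simpa using hh1z, ?_⟩
      rcases hp1 with h | h <;> rw [h] <;> ring
    · have hqd : q ∣ h1 := by
        have hco : IsCoprime q p := by
          rw [Int.isCoprime_iff_gcd_eq_one, Int.gcd_comm]; exact hcop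
        have hdvd : q ∣ h1 * p := ⟨-h2, by linear_combination hperp'⟩
        exact hco.dvd_of_dvd_mul_right hdvd
      obtain ⟨s, hs⟩ := hqd
      have hh2v : h2 = -(p * s) := by
        have hz : q * (p * s + h2) = 0 := by rw [hs] at hperp'; linear_combination hperp'
        have := (mul_eq_zero.mp hz).resolve_left hq0
        linarith
      exact ⟨-s, by rw [hs]; ring, by rw [hh2v]; ring⟩
  have hpqne : ¬(p = 0 ∧ q = 0) := by
    rintro ⟨e1, e2⟩; rw [e1, e2] at hcop; simp [Int.gcd] at hcop
  have hpq : 0 < p ^ 2 + q ^ 2 := by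
    rcases eq_or_ne p 0 with h | h
    · have hqne : q ≠ 0 := fun h' => hpqne ⟨h, h'⟩
      have : 0 < q ^ 2 := by rcases hqne.lt_or_gt with h' | h' <;> nlinarith
      nlinarith [sq_nonneg p]
    · have : 0 < p ^ 2 := by rcases h.lt_or_gt with h' | h' <;> nlinarith
      nlinarith [sq_nonneg q]
  have hct : c * t = d * L := by
    have hfac : (L * (p ^ 2 + q ^ 2)) * (c * t) = (L * (p ^ 2 + q ^ 2)) * (d * L) := by
      rw [hw1', hw2', ht1, ht2] at hcross; linear_combination hcross
    exact mul_left_cancel₀ (mul_pos hLpos hpq).ne' hfac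
  have hteven : Even t := by
    by_contra hodd
    have hp2 : Even p := by
      rcases Int.even_mul.mp (ht2 ▸ hh2) with h | h
      · exact h
      · exact absurd h hodd
    have hq2 : Even q := by
      have hqt : Even (q * t) := by
        have h' := hh1; rw [ht1] at h'; exact even_neg.mp h'
      rcases Int.even_mul.mp hqt with h | h
      · exact h
      · exact absurd h hodd
    have : Even (Int.gcd p q) := by
      have := Nat.dvd_gcd (Int.natAbs_even.mpr hp2).two_dvd (Int.natAbs_even.mpr hq2).two_dvd
      exact even_iff_two_dvd.mpr this
    rw [hcop] at this; simp at this
  have htne : t ≠ 0 := by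
    intro h0
    rw [h0, mul_zero] at hct
    exact (mul_pos hd hLpos).ne' hct.symm
  have ht2' : 2 ≤ |t| := by
    rcases hteven with ⟨k, hk⟩
    rcases abs_cases t with ⟨h, _⟩ | ⟨h, _⟩ <;> omega
  have habs : |c| * |t| = d * L := by
    rw [← abs_mul, hct, abs_of_pos (mul_pos hd hLpos)]
  calc 2 * |c| ≤ |t| * |c| := by nlinarith [abs_nonneg c]
    _ = d * L := by rw [mul_comm]; exact habs
    _ = L * d := mul_comm _ _

/-- Integer core of the proof. -/
lemma stmt11_key (a1 a2 b1 b2 f1 f2 : ℤ)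
    (hc : a1 * b2 - b1 * a2 ≠ 0)
    (eA : 2 * f1 * a1 + 2 * f2 * a2 = a1 ^ 2 + a2 ^ 2)
    (eB : 2 * f1 * b1 + 2 * f2 * b2 = b1 ^ 2 + b2 ^ 2)
    (hev : Even ((Int.gcd (a1 - b1) (a2 - b2) : ℤ))) :
    (Even (a1 + b1 - 2 * f1) ∧ Even (a2 + b2 - 2 * f2)) ∧
      (0 < a1 * b1 + a2 * b2 →
        2 * |a1 * b2 - b1 * a2| ≤ (Int.gcd (a1 - b1) (a2 - b2) : ℤ) * (a1 * b1 + a2 * b2)) := by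
  have hgcd1 : (Int.gcd (a1 - b1) (a2 - b2) : ℤ) ∣ (a1 - b1) := Int.gcd_dvd_left _ _
  have hgcd2 : (Int.gcd (a1 - b1) (a2 - b2) : ℤ) ∣ (a2 - b2) := Int.gcd_dvd_right _ _
  have h2w1 : (2 : ℤ) ∣ (a1 - b1) := dvd_trans hev.two_dvd hgcd1
  have h2w2 : (2 : ℤ) ∣ (a2 - b2) := dvd_trans hev.two_dvd hgcd2
  have heven1 : Even (a1 + b1 - 2 * f1) := by
    rcases h2w1 with ⟨k, hk⟩; exact ⟨k + b1 - f1, by omega⟩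
  have heven2 : Even (a2 + b2 - 2 * f2) := by
    rcases h2w2 with ⟨k, hk⟩; exact ⟨k + b2 - f2, by omega⟩
  refine ⟨⟨heven1, heven2⟩, ?_⟩
  intro hd
  have hwne : ¬((a1 - b1) = 0 ∧ (a2 - b2) = 0) := by
    rintro ⟨e1, e2⟩
    have ha1 : a1 = b1 := by omega
    have ha2 : a2 = b2 := by omega
    exact hc (by rw [ha1, ha2]; ring)
  have hgpos : 0 < Int.gcd (a1 - b1) (a2 - b2) := by
    rcases Nat.eq_zero_or_pos (Int.gcd (a1 - b1) (a2 - b2)) with h | h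
    · exact absurd ⟨(Int.gcd_eq_zero_iff.mp h).1, (Int.gcd_eq_zero_iff.mp h).2⟩ hwne
    · exact h
  have hperp : (a1 - b1) * (a1 + b1 - 2 * f1) + (a2 - b2) * (a2 + b2 - 2 * f2) = 0 := by
    linear_combination eB - eA
  have hcross : (a1 * b2 - b1 * a2) *
      ((a1 - b1) * (a2 + b2 - 2 * f2) - (a2 - b2) * (a1 + b1 - 2 * f1)) =
      (a1 * b1 + a2 * b2) * ((a1 - b1) ^ 2 + (a2 - b2) ^ 2) := by
    linear_combination (a1 * b1 + a2 * b2 - (b1 ^ 2 + b2 ^ 2)) * eA +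
      (a1 * b1 + a2 * b2 - (a1 ^ 2 + a2 ^ 2)) * eB
  exact stmt11_core (a1 * b2 - b1 * a2) (a1 * b1 + a2 * b2) _ (a1 - b1) (a2 - b2)
    (a1 + b1 - 2 * f1) (a2 + b2 - 2 * f2) hd hgpos rfl heven1 heven2 hperp hcross

/-- Real part: from the integer inequality to the tangent bound. -/
lemma stmt11_real (c d na2 nb2 : ℤ) (hna : 0 < na2) (hnb : 0 < nb2)
    (hlag : d ^ 2 + c ^ 2 = na2 * nb2) (L : ℕ)
    (hineq : 0 < d → 2 * |c| ≤ (L : ℤ) * d) :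
    Real.tan (Real.arccos ((d : ℝ) / (Real.sqrt na2 * Real.sqrt nb2))) ≤ (L : ℝ) / 2 := by
  have hnar : (0 : ℝ) < (na2 : ℝ) := by exact_mod_cast hna
  have hnbr : (0 : ℝ) < (nb2 : ℝ) := by exact_mod_cast hnb
  have hsa : (0 : ℝ) < Real.sqrt na2 := Real.sqrt_pos.mpr hnar
  have hsb : (0 : ℝ) < Real.sqrt nb2 := Real.sqrt_pos.mpr hnbr
  have hsab : (0 : ℝ) < Real.sqrt na2 * Real.sqrt nb2 := mul_pos hsa hsb
  rw [Real.tan_arccos]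
  rcases le_or_gt d 0 with hd | hd
  · have hdr : (d : ℝ) ≤ 0 := by exact_mod_cast hd
    have hx : (d : ℝ) / (Real.sqrt na2 * Real.sqrt nb2) ≤ 0 :=
      div_nonpos_of_nonpos_of_nonneg hdr hsab.le
    have h0 : Real.sqrt (1 - ((d : ℝ) / (Real.sqrt na2 * Real.sqrt nb2)) ^ 2) /
        ((d : ℝ) / (Real.sqrt na2 * Real.sqrt nb2)) ≤ 0 :=
      div_nonpos_of_nonneg_of_nonpos (Real.sqrt_nonneg _) hx
    have hL0 : (0 : ℝ) ≤ (L : ℝ) / 2 := by positivity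
    linarith
  · have hdr : (0 : ℝ) < (d : ℝ) := by exact_mod_cast hd
    have hlagr : (d : ℝ) ^ 2 + (c : ℝ) ^ 2 = (na2 : ℝ) * (nb2 : ℝ) := by exact_mod_cast hlag
    have hx2 : 1 - ((d : ℝ) / (Real.sqrt na2 * Real.sqrt nb2)) ^ 2
        = (c : ℝ) ^ 2 / ((na2 : ℝ) * (nb2 : ℝ)) := by
      rw [div_pow, mul_pow, Real.sq_sqrt hnar.le, Real.sq_sqrt hnbr.le]
      field_simp
      linarith
    have hs : Real.sqrt (1 - ((d : ℝ) / (Real.sqrt na2 * Real.sqrt nb2)) ^ 2)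
        = |(c : ℝ)| / (Real.sqrt na2 * Real.sqrt nb2) := by
      rw [hx2, Real.sqrt_div (by positivity) _, Real.sqrt_sq_eq_abs,
        Real.sqrt_mul hnar.le]
    have hkey : Real.sqrt (1 - ((d : ℝ) / (Real.sqrt na2 * Real.sqrt nb2)) ^ 2) /
        ((d : ℝ) / (Real.sqrt na2 * Real.sqrt nb2)) = |(c : ℝ)| / (d : ℝ) := by
      rw [hs]
      rw [div_div_div_cancel_right₀]
      exact hsab.ne'
    rw [hkey, div_le_div_iff₀ hdr two_pos]
    have h2 := hineq hd
    have h2r : 2 * |(c : ℝ)| ≤ (L : ℝ) * (d : ℝ) := by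
      have hcast : ((2 * |c| : ℤ) : ℝ) ≤ (((L : ℤ) * d : ℤ) : ℝ) := by exact_mod_cast h2
      push_cast at hcast
      linarith
    linarith

theorem stmt11 (A B F : ℤ × ℤ) (hT : Noncollinear (0, 0) A B)
    (hF : IsCircumcenter F (0, 0) A B) (hev : Even (llen A B)) :
    (Even (A.1 + B.1 - 2 * F.1) ∧ Even (A.2 + B.2 - 2 * F.2)) ∧
    Real.tan (angleAt (0, 0) A B) ≤ (llen A B : ℝ) / 2 := by
  simp only [Noncollinear] at hT
  have hc : A.1 * B.2 - B.1 * A.2 ≠ 0 := by simpa using hT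
  simp only [IsCircumcenter, dotv] at hF
  obtain ⟨hF1, hF2⟩ := hF
  simp only [Prod.fst_sub, Prod.snd_sub] at hF1 hF2
  have eA : 2 * F.1 * A.1 + 2 * F.2 * A.2 = A.1 ^ 2 + A.2 ^ 2 := by
    have h := hF1; simp at h; linear_combination h
  have eB : 2 * F.1 * B.1 + 2 * F.2 * B.2 = B.1 ^ 2 + B.2 ^ 2 := by
    have h := hF2; simp at h; linear_combination h
  have hev' : Even ((Int.gcd (A.1 - B.1) (A.2 - B.2) : ℤ)) := by
    rw [Int.even_coe_nat]; exact hev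
  obtain ⟨hpar, hineq⟩ := stmt11_key A.1 A.2 B.1 B.2 F.1 F.2 hc eA eB hev'
  refine ⟨hpar, ?_⟩
  have hAne : ¬(A.1 = 0 ∧ A.2 = 0) := by
    rintro ⟨e1, e2⟩; exact hc (by rw [e1, e2]; ring)
  have hBne : ¬(B.1 = 0 ∧ B.2 = 0) := by
    rintro ⟨e1, e2⟩; exact hc (by rw [e1, e2]; ring)
  have hna : 0 < A.1 ^ 2 + A.2 ^ 2 := by
    rcases eq_or_ne A.1 0 with h | h
    · have h' : A.2 ≠ 0 := fun h' => hAne ⟨h, h'⟩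
      have : 0 < A.2 ^ 2 := by rcases h'.lt_or_gt with h'' | h'' <;> nlinarith
      nlinarith [sq_nonneg A.1]
    · have : 0 < A.1 ^ 2 := by rcases h.lt_or_gt with h'' | h'' <;> nlinarith
      nlinarith [sq_nonneg A.2]
  have hnb : 0 < B.1 ^ 2 + B.2 ^ 2 := by
    rcases eq_or_ne B.1 0 with h | h
    · have h' : B.2 ≠ 0 := fun h' => hBne ⟨h, h'⟩
      have : 0 < B.2 ^ 2 := by rcases h'.lt_or_gt with h'' | h'' <;> nlinarith
      nlinarith [sq_nonneg B.1]
    · have : 0 < B.1 ^ 2 := by rcases h.lt_or_gt with h'' | h'' <;> nlinarith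
      nlinarith [sq_nonneg B.2]
  have hlag : (A.1 * B.1 + A.2 * B.2) ^ 2 + (A.1 * B.2 - B.1 * A.2) ^ 2
      = (A.1 ^ 2 + A.2 ^ 2) * (B.1 ^ 2 + B.2 ^ 2) := by ring
  have hfin := stmt11_real (A.1 * B.2 - B.1 * A.2) (A.1 * B.1 + A.2 * B.2)
    (A.1 ^ 2 + A.2 ^ 2) (B.1 ^ 2 + B.2 ^ 2) hna hnb hlag (llen A B)
    (fun hd => hineq hd)
  simpa [angleAt] using hfin
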